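/- Let x ∈ (0,1)^N. Then Σ_{i=1}^N (β b_i(x)(1 − x_i) − δ x_i)/(1 − x_i) + (1/2)·Σ_{i=1}^N σ_i(x_i)² b_i(x)² ≤ β λ1 N − δ·Σ_{i=1}^N x_i/(1 − x_i) + (M²/2) λ1² N. -/

import Mathlib

open Finset
open scoped InnerProductSpace

section aux
variable {N : ℕ} {A : Matrix (Fin N) (Fin N) ℝ} {lam1 : ℝ}

lemma herm_of_symm (h : A.IsSymm) : A.IsHermitian := by
  rwa [Matrix.IsHermitian, Matrix.conjTranspose_eq_transpose_of_trivial]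

lemma inner_coord (u v : EuclideanSpace ℝ (Fin N)) : ⟪u, v⟫_ℝ = ∑ i, u i * v i := by
  simp [PiLp.inner_apply]
  exact Finset.sum_congr rfl fun i _ => mul_comm _ _

lemma key_inner (hA : A.IsSymm) (k : Fin N) (w : EuclideanSpace ℝ (Fin N)) :
    ⟪(herm_of_symm hA).eigenvectorBasis k, (WithLp.toLp 2 (A.mulVec w) : EuclideanSpace ℝ (Fin N))⟫_ℝ
      = (herm_of_symm hA).eigenvalues k * ⟪(herm_of_symm hA).eigenvectorBasis k, w⟫_ℝ := by
  set hH := herm_of_symm hA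
  rw [inner_coord, inner_coord]
  simp only [WithLp.ofLp_toLp]
  have h1 : ∑ i, (hH.eigenvectorBasis k) i * (A.mulVec w) i
      = ∑ i, (A.mulVec (hH.eigenvectorBasis k)) i * w i := by
    have h0 : dotProduct (fun i => hH.eigenvectorBasis k i) (A.mulVec w)
        = dotProduct (A.mulVec (fun i => hH.eigenvectorBasis k i)) w := by
      rw [Matrix.dotProduct_mulVec, ← Matrix.mulVec_transpose, hA.eq]
    simpa [dotProduct] using h0
  have h2 : ∀ i, A.mulVec (hH.eigenvectorBasis k) i
      = hH.eigenvalues k * hH.eigenvectorBasis k i := by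
    intro i
    have h3 := congrFun (hH.mulVec_eigenvectorBasis k) i
    simpa using h3
  rw [h1, Finset.mul_sum]
  refine Finset.sum_congr rfl fun i _ => ?_
  rw [h2 i]; ring

lemma rayleigh_le (hA : A.IsSymm)
    (hmax : ∀ (μ : ℝ) (v : Fin N → ℝ), v ≠ 0 → A.mulVec v = μ • v → μ ≤ lam1)
    (y : Fin N → ℝ) :
    ∑ i, y i * A.mulVec y i ≤ lam1 * ∑ i, (y i) ^ 2 := by
  set hH := herm_of_symm hA
  set B := hH.eigenvectorBasis with hB
  set e := hH.eigenvalues with he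
  let Y : EuclideanSpace ℝ (Fin N) := WithLp.toLp 2 y
  have hek : ∀ k, e k ≤ lam1 := fun k =>
    hmax (e k) (B k) ((WithLp.ofLp_eq_zero 2).ne.2 (hH.eigenvectorBasis.orthonormal.ne_zero k))
      (hH.mulVec_eigenvectorBasis k)
  have hsum : ∑ k, ⟪Y, B k⟫_ℝ * ⟪B k, (WithLp.toLp 2 (A.mulVec Y) : EuclideanSpace ℝ (Fin N))⟫_ℝ
      = ⟪Y, (WithLp.toLp 2 (A.mulVec Y) : EuclideanSpace ℝ (Fin N))⟫_ℝ :=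
    B.sum_inner_mul_inner Y _
  have hsum2 : ∑ k, ⟪Y, B k⟫_ℝ * ⟪B k, Y⟫_ℝ = ⟪Y, Y⟫_ℝ := B.sum_inner_mul_inner Y Y
  have hL : ∑ i, y i * A.mulVec y i = ∑ k, e k * ⟪B k, Y⟫_ℝ ^ 2 := by
    rw [show ∑ i, y i * A.mulVec y i = ⟪Y, (WithLp.toLp 2 (A.mulVec Y) : EuclideanSpace ℝ (Fin N))⟫_ℝ from
      (inner_coord Y (WithLp.toLp 2 (A.mulVec Y))).symm, ← hsum]
    congr 1; ext k
    rw [key_inner hA k Y, real_inner_comm Y (B k)]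
    ring
  have hR : ∑ i, (y i) ^ 2 = ∑ k, ⟪B k, Y⟫_ℝ ^ 2 := by
    have : ⟪Y, Y⟫_ℝ = ∑ i, y i * y i := inner_coord Y Y
    rw [show (∑ i, (y i) ^ 2) = ⟪Y, Y⟫_ℝ by rw [this]; simp [sq], ← hsum2]
    congr 1; ext k
    rw [real_inner_comm Y (B k)]; ring
  rw [hL, hR, Finset.mul_sum]
  exact Finset.sum_le_sum fun k _ =>
    mul_le_mul_of_nonneg_right (hek k) (sq_nonneg _)

lemma eig_abs_le (hA : A.IsSymm) (hA0 : ∀ i j, 0 ≤ A i j)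
    (hmax : ∀ (μ : ℝ) (v : Fin N → ℝ), v ≠ 0 → A.mulVec v = μ • v → μ ≤ lam1)
    (μ : ℝ) (v : Fin N → ℝ) (hv : v ≠ 0) (heq : A.mulVec v = μ • v) :
    |μ| ≤ lam1 := by
  set w : Fin N → ℝ := fun i => |v i| with hw
  have hvsq : 0 < ∑ i, (v i) ^ 2 := by
    have : ∃ i, v i ≠ 0 := by
      by_contra h; push_neg at h; exact hv (funext h)
    obtain ⟨i, hi⟩ := this
    exact Finset.sum_pos' (fun j _ => sq_nonneg _) ⟨i, Finset.mem_univ i, by positivity⟩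
  have hAvw : ∀ i, |A.mulVec v i| ≤ A.mulVec w i := by
    intro i
    calc |A.mulVec v i| = |∑ j, A i j * v j| := by simp [Matrix.mulVec, dotProduct]
      _ ≤ ∑ j, |A i j * v j| := Finset.abs_sum_le_sum_abs _ _
      _ = ∑ j, A i j * |v j| := by
          congr 1; ext j; rw [abs_mul, abs_of_nonneg (hA0 i j)]
      _ = A.mulVec w i := by simp [Matrix.mulVec, dotProduct, hw]
  have h1 : |μ| * ∑ i, (v i) ^ 2 ≤ ∑ i, w i * A.mulVec w i := by
    have : |μ| * ∑ i, (v i) ^ 2 = |∑ i, v i * A.mulVec v i| := by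
      rw [heq]
      have : ∑ i, v i * (μ • v) i = μ * ∑ i, (v i) ^ 2 := by
        rw [Finset.mul_sum]; congr 1; ext i; simp [sq]; ring
      rw [this, abs_mul, abs_of_nonneg hvsq.le]
    rw [this]
    calc |∑ i, v i * A.mulVec v i| ≤ ∑ i, |v i * A.mulVec v i| :=
        Finset.abs_sum_le_sum_abs _ _
      _ ≤ ∑ i, w i * A.mulVec w i := by
          apply Finset.sum_le_sum
          intro i _
          rw [abs_mul]
          exact mul_le_mul_of_nonneg_left (hAvw i) (abs_nonneg _)
  have h2 : ∑ i, w i * A.mulVec w i ≤ lam1 * ∑ i, (v i) ^ 2 := by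
    have := rayleigh_le hA hmax w
    simpa [hw, sq_abs] using this
  have := h1.trans h2
  exact le_of_mul_le_mul_right (by linarith [this]) hvsq |>.trans le_rfl

lemma mulVec_sq_le (hA : A.IsSymm) (hA0 : ∀ i j, 0 ≤ A i j)
    (hmax : ∀ (μ : ℝ) (v : Fin N → ℝ), v ≠ 0 → A.mulVec v = μ • v → μ ≤ lam1)
    (y : Fin N → ℝ) :
    ∑ i, (A.mulVec y i) ^ 2 ≤ lam1 ^ 2 * ∑ i, (y i) ^ 2 := by
  set hH := herm_of_symm hA
  set B := hH.eigenvectorBasis with hB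
  set e := hH.eigenvalues with he
  let Y : EuclideanSpace ℝ (Fin N) := WithLp.toLp 2 y
  have habs : ∀ k, |e k| ≤ lam1 := fun k =>
    eig_abs_le hA hA0 hmax (e k) (B k) ((WithLp.ofLp_eq_zero 2).ne.2 (hH.eigenvectorBasis.orthonormal.ne_zero k))
      (hH.mulVec_eigenvectorBasis k)
  have hsq : ∀ k, (e k) ^ 2 ≤ lam1 ^ 2 := by
    intro k
    calc (e k) ^ 2 = |e k| ^ 2 := (sq_abs _).symm
      _ ≤ lam1 ^ 2 := pow_le_pow_left₀ (abs_nonneg _) (habs k) 2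
  have hAY : ∀ k, ⟪B k, (WithLp.toLp 2 (A.mulVec Y) : EuclideanSpace ℝ (Fin N))⟫_ℝ = e k * ⟪B k, Y⟫_ℝ :=
    fun k => key_inner hA k Y
  have normsq : ∀ w : EuclideanSpace ℝ (Fin N), ∑ i, (w i) ^ 2 = ∑ k, ⟪B k, w⟫_ℝ ^ 2 := by
    intro w
    have hsum2 : ∑ k, ⟪w, B k⟫_ℝ * ⟪B k, w⟫_ℝ = ⟪w, w⟫_ℝ := B.sum_inner_mul_inner w w
    rw [show (∑ i, (w i) ^ 2) = ⟪w, w⟫_ℝ by rw [inner_coord]; simp [sq], ← hsum2]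
    congr 1; ext k
    rw [real_inner_comm w (B k)]; ring
  calc ∑ i, (A.mulVec y i) ^ 2
      = ∑ k, ⟪B k, (WithLp.toLp 2 (A.mulVec Y) : EuclideanSpace ℝ (Fin N))⟫_ℝ ^ 2 := normsq (WithLp.toLp 2 (A.mulVec Y))
    _ = ∑ k, (e k) ^ 2 * ⟪B k, Y⟫_ℝ ^ 2 := by
        congr 1; ext k; rw [hAY k]; ring
    _ ≤ ∑ k, lam1 ^ 2 * ⟪B k, Y⟫_ℝ ^ 2 :=
        Finset.sum_le_sum fun k _ => mul_le_mul_of_nonneg_right (hsq k) (sq_nonneg _)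
    _ = lam1 ^ 2 * ∑ i, (y i) ^ 2 := by rw [← Finset.mul_sum]; exact congrArg (lam1 ^ 2 * ·) (normsq Y).symm
end aux

/-- Bound on `L V₂` for the Lyapunov function `V₂(x) = -∑ᵢ log(1-xᵢ)` used in the proof of
positive recurrence and ergodicity (Theorem 4.6): for `x ∈ (0,1)^N`,
`∑ i (β b_i(x)(1-x_i) - δ x_i)/(1-x_i) + (1/2) ∑ i σ_i(x_i)² b_i(x)²
  ≤ β λ₁ N - δ ∑ i x_i/(1-x_i) + (M²/2) λ₁² N`. -/
theorem LV2_estimate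
    (N : ℕ) (hN : 1 ≤ N)
    (A : Matrix (Fin N) (Fin N) ℝ)
    (hA_symm : A.IsSymm)
    (hA_01 : ∀ i j, A i j = 0 ∨ A i j = 1)
    (hA_diag : ∀ i, A i i = 0)
    (lam1 : ℝ)
    (hlam1_eig : ∃ v : Fin N → ℝ, v ≠ 0 ∧ A.mulVec v = lam1 • v)
    (hlam1_max : ∀ (μ : ℝ) (v : Fin N → ℝ), v ≠ 0 → A.mulVec v = μ • v → μ ≤ lam1)
    (β δ : ℝ) (hβ : 0 ≤ β) (hδ : 0 ≤ δ)
    (M : ℝ) (hM : 0 ≤ M)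
    (σ : Fin N → ℝ → ℝ)
    (hσ : ∀ i, ∀ v ∈ Set.Ioo (0 : ℝ) 1, |σ i v| ≤ M * v)
    (x : Fin N → ℝ) (hx : ∀ i, x i ∈ Set.Ioo (0 : ℝ) 1) :
    ∑ i, (β * (∑ j, A i j * x j) * (1 - x i) - δ * x i) / (1 - x i)
        + (1 / 2) * ∑ i, (σ i (x i)) ^ 2 * (∑ j, A i j * x j) ^ 2
      ≤ β * lam1 * N - δ * ∑ i, x i / (1 - x i) + M ^ 2 / 2 * lam1 ^ 2 * N := by
  have hA0 : ∀ i j, 0 ≤ A i j := fun i j => by rcases hA_01 i j with h | h <;> simp [h]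
  have hx1 : ∀ i, 0 < 1 - x i := fun i => by linarith [(hx i).2]
  have hbm : ∀ i, A.mulVec x i = ∑ j, A i j * x j := fun i => by
    simp [Matrix.mulVec, dotProduct]
  have hS0 : ∀ i, 0 ≤ ∑ j, A i j * x j := fun i =>
    Finset.sum_nonneg fun j _ => mul_nonneg (hA0 i j) (hx j).1.le
  have hxsq : ∑ i, (x i) ^ 2 ≤ (N : ℝ) := by
    calc ∑ i, (x i) ^ 2 ≤ ∑ _i : Fin N, (1 : ℝ) :=
          Finset.sum_le_sum fun i _ => by nlinarith [(hx i).1, (hx i).2]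
      _ = (N : ℝ) := by simp
  have hlam : 0 ≤ lam1 := by
    obtain ⟨v, hv, hveq⟩ := hlam1_eig
    have := eig_abs_le hA_symm hA0 hlam1_max lam1 v hv hveq
    linarith [abs_nonneg lam1]
  have hbsq : ∑ i, (∑ j, A i j * x j) ^ 2 ≤ lam1 ^ 2 * (N : ℝ) := by
    have h := mulVec_sq_le hA_symm hA0 hlam1_max x
    have heq : ∑ i, (A.mulVec x i) ^ 2 = ∑ i, (∑ j, A i j * x j) ^ 2 :=
      Finset.sum_congr rfl fun i _ => by rw [hbm i]
    have h2 : lam1 ^ 2 * ∑ i, (x i) ^ 2 ≤ lam1 ^ 2 * (N : ℝ) :=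
      mul_le_mul_of_nonneg_left hxsq (sq_nonneg _)
    linarith [heq ▸ h]
  have hbsum : ∑ i, (∑ j, A i j * x j) ≤ lam1 * (N : ℝ) := by
    have h1 : (∑ i, (∑ j, A i j * x j)) ^ 2 ≤ (N : ℝ) * ∑ i, (∑ j, A i j * x j) ^ 2 := by
      simpa using sq_sum_le_card_mul_sum_sq (s := (Finset.univ : Finset (Fin N)))
        (f := fun i => ∑ j, A i j * x j)
    have h2 : (∑ i, (∑ j, A i j * x j)) ^ 2 ≤ (lam1 * (N : ℝ)) ^ 2 := by
      have hN0 : (0 : ℝ) ≤ (N : ℝ) := Nat.cast_nonneg N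
      nlinarith [hbsq]
    exact le_of_pow_le_pow_left₀ two_ne_zero (by positivity) h2
  have hS2 : ∑ i, (σ i (x i)) ^ 2 * (∑ j, A i j * x j) ^ 2 ≤ M ^ 2 * (lam1 ^ 2 * (N : ℝ)) := by
    have hstep : ∀ i, (σ i (x i)) ^ 2 * (∑ j, A i j * x j) ^ 2
        ≤ M ^ 2 * (∑ j, A i j * x j) ^ 2 := by
      intro i
      have h1 := hσ i (x i) (hx i)
      have hσsq : (σ i (x i)) ^ 2 ≤ M ^ 2 := by
        have h2 : |σ i (x i)| ≤ M := h1.trans (by nlinarith [(hx i).1, (hx i).2, hM])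
        have h3 := abs_le.1 h2
        nlinarith [h3.1, h3.2]
      exact mul_le_mul_of_nonneg_right hσsq (sq_nonneg _)
    calc ∑ i, (σ i (x i)) ^ 2 * (∑ j, A i j * x j) ^ 2
        ≤ ∑ i, M ^ 2 * (∑ j, A i j * x j) ^ 2 := Finset.sum_le_sum fun i _ => hstep i
      _ = M ^ 2 * ∑ i, (∑ j, A i j * x j) ^ 2 := by rw [Finset.mul_sum]
      _ ≤ M ^ 2 * (lam1 ^ 2 * (N : ℝ)) := mul_le_mul_of_nonneg_left hbsq (sq_nonneg _)
  have hS1 : ∑ i, (β * (∑ j, A i j * x j) * (1 - x i) - δ * x i) / (1 - x i)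
      = β * ∑ i, (∑ j, A i j * x j) - δ * ∑ i, x i / (1 - x i) := by
    rw [Finset.mul_sum, Finset.mul_sum, ← Finset.sum_sub_distrib]
    refine Finset.sum_congr rfl fun i _ => ?_
    field_simp [(hx1 i).ne']
  rw [hS1]
  nlinarith [mul_le_mul_of_nonneg_left hbsum hβ, hS2]
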